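/- arXiv:2407.19741 — 2 statements merged into one kernel-verified Lean document; each statement's English description precedes it below -/
import Mathlib

section
/- Let φ : [0,∞) → [0,∞) be a measurable probability density with ∫_0^∞ φ(s) ds = 1 and finite positive mean m = ∫_0^∞ s φ(s) ds ∈ (0,∞), let a > 1, μ > 0, and let u : [0,∞) → ℝ be a locally bounded measurable solution of u(t) = μ t + a ∫_0^t φ(t−s) u(s) ds for all t ≥ 0. Then u(t) = μ t + μ ∫_0^t s Ψ(t−s) ds for all t ≥ 0, where Ψ(t) = ∑_{n≥1} (a φ)^{*n}(t). -/
open MeasureTheory Filter Topology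

/-- Convolution powers: `convPow ψ n = ψ^{*(n+1)}`, i.e. `convPow ψ 0 = ψ` and
`convPow ψ (n+1) t = ∫_0^t ψ(t-s) ψ^{*(n+1)}(s) ds`. -/
noncomputable def convPow (ψ : ℝ → ℝ) : ℕ → ℝ → ℝ
  | 0 => ψ
  | n + 1 => fun t => ∫ s in (0:ℝ)..t, ψ (t - s) * convPow ψ n s

open scoped ENNReal

section Aux

variable {g : ℝ → ℝ}

lemma convPow_neg (hg : ∀ s < (0:ℝ), g s = 0) :
    ∀ n, ∀ t < (0:ℝ), convPow g n t = 0 := by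
  intro n
  induction n with
  | zero => exact fun t ht => hg t ht
  | succ n ih =>
    intro t ht
    show (∫ s in (0:ℝ)..t, g (t - s) * convPow g n s) = 0
    rw [intervalIntegral.integral_of_ge ht.le, neg_eq_zero]
    apply setIntegral_eq_zero_of_forall_eq_zero
    intro s hs
    rcases lt_or_eq_of_le hs.2 with h0 | h0
    · rw [ih s h0, mul_zero]
    · rw [h0] at *
      rw [sub_zero, hg t ht, zero_mul]

lemma conv_eq_integral (hg : ∀ s < (0:ℝ), g s = 0) {h : ℝ → ℝ}
    (hh : ∀ s < (0:ℝ), h s = 0) (t : ℝ) :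
    (∫ s in (0:ℝ)..t, g (t - s) * h s) = ∫ s, g (t - s) * h s := by
  rcases le_or_gt 0 t with ht | ht
  · rw [intervalIntegral.integral_of_le ht, ← integral_Icc_eq_integral_Ioc,
      setIntegral_eq_integral_of_forall_compl_eq_zero]
    intro x hx
    simp only [Set.mem_Icc, not_and_or, not_le] at hx
    rcases hx with hx | hx
    · rw [hh x hx, mul_zero]
    · rw [hg (t - x) (by linarith), zero_mul]
  · have hz : ∀ s : ℝ, g (t - s) * h s = 0 := by
      intro s
      rcases lt_or_ge s 0 with h0 | h0
      · rw [hh s h0, mul_zero]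
      · rw [hg (t - s) (by linarith), zero_mul]
    rw [intervalIntegral.integral_of_ge ht.le,
      setIntegral_eq_zero_of_forall_eq_zero (fun x _ => hz x), neg_zero]
    simp only [hz, integral_zero]

lemma convPow_meas (hgm : Measurable g) (hg : ∀ s < (0:ℝ), g s = 0) :
    ∀ n, Measurable (convPow g n) := by
  intro n
  induction n with
  | zero => exact hgm
  | succ n ih =>
    have heq : convPow g (n + 1) = fun t => ∫ s, g (t - s) * convPow g n s :=
      funext fun t => conv_eq_integral hg (convPow_neg hg n) t
    rw [heq]
    have hF : StronglyMeasurable fun p : ℝ × ℝ => g (p.1 - p.2) * convPow g n p.2 :=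
      ((hgm.comp (measurable_fst.sub measurable_snd)).mul
        (ih.comp measurable_snd)).stronglyMeasurable
    exact hF.integral_prod_right'.measurable

lemma convPow_nonneg (hg : ∀ s < (0:ℝ), g s = 0) (hg0 : ∀ s, 0 ≤ g s) :
    ∀ n t, 0 ≤ convPow g n t := by
  intro n
  induction n with
  | zero => exact hg0
  | succ n ih =>
    intro t
    rcases le_or_gt 0 t with ht | ht
    · show 0 ≤ ∫ s in (0:ℝ)..t, g (t - s) * convPow g n s
      exact intervalIntegral.integral_nonneg ht fun s _ => mul_nonneg (hg0 _) (ih s)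
    · rw [convPow_neg hg (n + 1) t ht]

end Aux

noncomputable def lap (l : ℝ) (f : ℝ → ℝ) : ℝ≥0∞ :=
  ∫⁻ t in Set.Ioi 0, ENNReal.ofReal (Real.exp (-(l * t)) * f t)

lemma ofReal_setIntegral_le {f : ℝ → ℝ} (hf : ∀ x, 0 ≤ f x) (s : Set ℝ) :
    ENNReal.ofReal (∫ x in s, f x) ≤ ∫⁻ x in s, ENNReal.ofReal (f x) := by
  by_cases hi : IntegrableOn f s
  · rw [ofReal_integral_eq_lintegral_ofReal hi (Filter.Eventually.of_forall hf)]
  · rw [integral_undef hi]; simp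

lemma lintegral_Ioi_eq {F : ℝ → ℝ≥0∞} (hF : ∀ x < (0:ℝ), F x = 0) :
    ∫⁻ x in Set.Ioi (0:ℝ), F x = ∫⁻ x, F x := by
  rw [← lintegral_add_compl (μ := volume) F (measurableSet_Ioi : MeasurableSet (Set.Ioi (0:ℝ)))]
  have h0 : ∫⁻ x in (Set.Ioi (0:ℝ))ᶜ, F x = 0 := by
    rw [Set.compl_Ioi, ← setLIntegral_congr (Iio_ae_eq_Iic (a := (0:ℝ)))]
    rw [setLIntegral_congr_fun measurableSet_Iio
      (fun x hx => hF x hx)]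
    simp
  rw [h0, add_zero]

lemma lintegral_reflect (F : ℝ → ℝ≥0∞) (c : ℝ) :
    ∫⁻ x, F (c - x) = ∫⁻ x, F x :=
  (Measure.measurePreserving_sub_left volume c).lintegral_comp_emb
    (Homeomorph.subLeft c).measurableEmbedding F

lemma lintegral_reflect_Icc (F : ℝ → ℝ≥0∞) (t : ℝ) :
    ∫⁻ s in Set.Icc 0 t, F (t - s) = ∫⁻ s in Set.Icc 0 t, F s := by
  have hpre : (fun x : ℝ => t - x) ⁻¹' Set.Icc 0 t = Set.Icc 0 t := by
    ext x
    simp only [Set.mem_preimage, Set.mem_Icc, sub_nonneg]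
    constructor <;> intro h <;> constructor <;> linarith [h.1, h.2]
  have h := (Measure.measurePreserving_sub_left volume t).setLIntegral_comp_preimage_emb
    (Homeomorph.subLeft t).measurableEmbedding F (Set.Icc 0 t)
  rw [hpre] at h
  exact h

lemma lintegral_reflect_Ioc (F : ℝ → ℝ≥0∞) (t : ℝ) :
    ∫⁻ s in Set.Ioc 0 t, F (t - s) = ∫⁻ s in Set.Ioc 0 t, F s := by
  rw [setLIntegral_congr (Ioc_ae_eq_Icc (a := (0:ℝ)) (b := t)),
    lintegral_reflect_Icc,
    ← setLIntegral_congr (Ioc_ae_eq_Icc (a := (0:ℝ)) (b := t))]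

variable {g : ℝ → ℝ}

lemma lap_conv_le {l : ℝ} (hgm : Measurable g) (hg0 : ∀ s, 0 ≤ g s)
    (hgneg : ∀ s < (0:ℝ), g s = 0)
    {h : ℝ → ℝ} (hhm : Measurable h) (hh0 : ∀ s, 0 ≤ h s)
    (hhneg : ∀ s < (0:ℝ), h s = 0) :
    lap l (fun t => ∫ s in (0:ℝ)..t, g (t - s) * h s) ≤ lap l g * lap l h := by
  set A : ℝ → ℝ≥0∞ := fun x => ENNReal.ofReal (Real.exp (-(l * x)) * g x) with hA
  set B : ℝ → ℝ≥0∞ := fun x => ENNReal.ofReal (Real.exp (-(l * x)) * h x) with hB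
  have hAm : Measurable A := by
    apply ENNReal.measurable_ofReal.comp
    exact ((Real.measurable_exp.comp (measurable_const.mul measurable_id).neg).mul hgm)
  have hBm : Measurable B := by
    apply ENNReal.measurable_ofReal.comp
    exact ((Real.measurable_exp.comp (measurable_const.mul measurable_id).neg).mul hhm)
  have hAneg : ∀ x < (0:ℝ), A x = 0 := by
    intro x hx; simp [hA, hgneg x hx]
  have hBneg : ∀ x < (0:ℝ), B x = 0 := by
    intro x hx; simp [hB, hhneg x hx]
  have step1 : lap l (fun t => ∫ s in (0:ℝ)..t, g (t - s) * h s)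
      ≤ ∫⁻ t in Set.Ioi (0:ℝ), ∫⁻ s, A (t - s) * B s := by
    apply setLIntegral_mono' measurableSet_Ioi
    intro t htpos
    have ht : (0:ℝ) ≤ t := le_of_lt htpos
    calc ENNReal.ofReal (Real.exp (-(l * t)) * ∫ s in (0:ℝ)..t, g (t - s) * h s)
        = ENNReal.ofReal (Real.exp (-(l * t))) *
            ENNReal.ofReal (∫ s in Set.Ioc (0:ℝ) t, g (t - s) * h s) := by
          rw [intervalIntegral.integral_of_le ht, ENNReal.ofReal_mul (Real.exp_nonneg _)]
      _ ≤ ENNReal.ofReal (Real.exp (-(l * t))) *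
            ∫⁻ s in Set.Ioc (0:ℝ) t, ENNReal.ofReal (g (t - s) * h s) := by
          exact mul_le_mul_right
            (ofReal_setIntegral_le (fun s => mul_nonneg (hg0 _) (hh0 _)) _) _
      _ = ∫⁻ s in Set.Ioc (0:ℝ) t,
            ENNReal.ofReal (Real.exp (-(l * t))) * ENNReal.ofReal (g (t - s) * h s) := by
          rw [lintegral_const_mul' _ _ ENNReal.ofReal_ne_top]
      _ = ∫⁻ s in Set.Ioc (0:ℝ) t, A (t - s) * B s := by
          apply lintegral_congr
          intro s
          rw [hA, hB, ← ENNReal.ofReal_mul (Real.exp_nonneg _),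
            ← ENNReal.ofReal_mul (mul_nonneg (Real.exp_nonneg _) (hg0 _))]
          congr 1
          rw [show Real.exp (-(l * (t - s))) * g (t - s) * (Real.exp (-(l * s)) * h s)
              = (Real.exp (-(l * (t - s))) * Real.exp (-(l * s))) * (g (t - s) * h s) from by
              ring, ← Real.exp_add]
          congr 1
          ring_nf
      _ ≤ ∫⁻ s, A (t - s) * B s := setLIntegral_le_lintegral _ _
  have hswap : (∫⁻ t, ∫⁻ s, A (t - s) * B s) = ∫⁻ s, ∫⁻ t, A (t - s) * B s := by
    apply lintegral_lintegral_swap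
    exact ((hAm.comp (measurable_fst.sub measurable_snd)).mul
      (hBm.comp measurable_snd)).aemeasurable
  calc lap l (fun t => ∫ s in (0:ℝ)..t, g (t - s) * h s)
      ≤ ∫⁻ t in Set.Ioi (0:ℝ), ∫⁻ s, A (t - s) * B s := step1
    _ ≤ ∫⁻ t, ∫⁻ s, A (t - s) * B s := setLIntegral_le_lintegral _ _
    _ = ∫⁻ s, ∫⁻ t, A (t - s) * B s := hswap
    _ = ∫⁻ s, (∫⁻ t, A (t - s)) * B s := by
        apply lintegral_congr; intro s
        rw [lintegral_mul_const' _ _ (by simp [hB] : B s ≠ ⊤)]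
    _ = ∫⁻ s, (∫⁻ x, A x) * B s := by
        apply lintegral_congr; intro s
        rw [lintegral_sub_right_eq_self A s]
    _ = (∫⁻ x, A x) * ∫⁻ s, B s := lintegral_const_mul _ hBm
    _ = lap l g * lap l h := by rw [← lintegral_Ioi_eq hAneg, ← lintegral_Ioi_eq hBneg]; rfl

lemma lap_convPow {l : ℝ} (hgm : Measurable g) (hg0 : ∀ s, 0 ≤ g s)
    (hgneg : ∀ s < (0:ℝ), g s = 0) :
    ∀ n, lap l (convPow g n) ≤ (lap l g) ^ (n + 1) := by
  intro n
  induction n with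
  | zero => rw [zero_add, pow_one]; exact le_of_eq rfl
  | succ n ih =>
    have h1 : lap l (convPow g (n + 1)) ≤ lap l g * lap l (convPow g n) := by
      have := lap_conv_le (l := l) hgm hg0 hgneg
        (convPow_meas hgm hgneg n) (convPow_nonneg hgneg hg0 n) (convPow_neg hgneg n)
      exact this
    calc lap l (convPow g (n + 1)) ≤ lap l g * lap l (convPow g n) := h1
      _ ≤ lap l g * (lap l g) ^ (n + 1) := mul_le_mul_right ih _
      _ = (lap l g) ^ (n + 2) := by rw [pow_succ]; ring

lemma exists_l (hgm : Measurable g) (hg0 : ∀ s, 0 ≤ g s)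
    (hgi : IntegrableOn g (Set.Ioi 0)) :
    ∃ l : ℝ, 0 ≤ l ∧ lap l g < 1 := by
  have hfin : (∫⁻ t in Set.Ioi (0:ℝ), ENNReal.ofReal (g t)) < ⊤ := by
    have := hgi.hasFiniteIntegral
    rw [hasFiniteIntegral_iff_norm] at this
    refine lt_of_le_of_lt (lintegral_mono fun t => ?_) this
    exact ENNReal.ofReal_le_ofReal (le_abs_self _)
  have htend : Tendsto (fun n : ℕ => lap (n : ℝ) g) atTop (𝓝 0) := by
    have h0 : (0 : ℝ≥0∞) = ∫⁻ t in Set.Ioi (0:ℝ), (0 : ℝ≥0∞) := by simp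
    rw [h0]
    apply tendsto_lintegral_of_dominated_convergence (fun t => ENNReal.ofReal (g t))
    · intro n
      exact (((measurable_const.mul measurable_id').neg.exp).mul hgm).ennreal_ofReal
    · intro n
      filter_upwards [ae_restrict_mem measurableSet_Ioi] with t ht
      apply ENNReal.ofReal_le_ofReal
      have h1 : Real.exp (-((n:ℝ) * t)) ≤ 1 := by
        rw [Real.exp_le_one_iff]
        have h2 := le_of_lt (show (0:ℝ) < t from ht)
        have h3 : (0:ℝ) ≤ (n:ℝ) := Nat.cast_nonneg n
        nlinarith
      calc Real.exp (-((n:ℝ) * t)) * g t ≤ 1 * g t :=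
            mul_le_mul_of_nonneg_right h1 (hg0 t)
        _ = g t := one_mul _
    · exact hfin.ne
    · filter_upwards [ae_restrict_mem measurableSet_Ioi] with t ht
      have ht0 : (0:ℝ) < t := ht
      have ha : Tendsto (fun n : ℕ => ((n:ℝ) * t)) atTop atTop :=
        Tendsto.atTop_mul_const ht0 tendsto_natCast_atTop_atTop
      have hb : Tendsto (fun n : ℕ => Real.exp (-((n:ℝ) * t))) atTop (𝓝 0) :=
        Real.tendsto_exp_atBot.comp (tendsto_neg_atBot_iff.mpr ha)
      have h1 : Tendsto (fun n : ℕ => Real.exp (-((n:ℝ) * t)) * g t) atTop (𝓝 (0 * g t)) :=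
        hb.mul_const _
      have h2 := (ENNReal.continuous_ofReal.tendsto _).comp h1
      simpa [Function.comp_def] using h2
  have : ∀ᶠ n : ℕ in atTop, lap (n:ℝ) g < 1 :=
    htend.eventually_lt_const (by norm_num)
  obtain ⟨n, hn⟩ := this.exists
  exact ⟨(n:ℝ), Nat.cast_nonneg n, hn⟩

lemma lint_Ioc_le {l : ℝ} (hl : 0 ≤ l) {f : ℝ → ℝ} (hf0 : ∀ s, 0 ≤ f s)
    {t : ℝ} (ht : 0 ≤ t) :
    ∫⁻ r in Set.Ioc 0 t, ENNReal.ofReal (f r)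
      ≤ ENNReal.ofReal (Real.exp (l * t)) * lap l f := by
  calc ∫⁻ r in Set.Ioc 0 t, ENNReal.ofReal (f r)
      ≤ ∫⁻ r in Set.Ioc 0 t,
          ENNReal.ofReal (Real.exp (l * t)) * ENNReal.ofReal (Real.exp (-(l * r)) * f r) := by
        apply setLIntegral_mono' measurableSet_Ioc
        intro r hr
        rw [← ENNReal.ofReal_mul (Real.exp_nonneg _)]
        apply ENNReal.ofReal_le_ofReal
        rw [← mul_assoc, ← Real.exp_add]
        have h1 : (1:ℝ) ≤ Real.exp (l * t + -(l * r)) := by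
          rw [Real.one_le_exp_iff]
          nlinarith [hr.1, hr.2]
        nlinarith [hf0 r, h1]
    _ = ENNReal.ofReal (Real.exp (l * t)) *
          ∫⁻ r in Set.Ioc 0 t, ENNReal.ofReal (Real.exp (-(l * r)) * f r) :=
        lintegral_const_mul' _ _ ENNReal.ofReal_ne_top
    _ ≤ ENNReal.ofReal (Real.exp (l * t)) * lap l f := by
        apply mul_le_mul_right
        exact lintegral_mono_set Set.Ioc_subset_Ioi_self

section Aux2
variable {g : ℝ → ℝ}

lemma integral_reflect (f : ℝ → ℝ) (c : ℝ) : ∫ x, f (c - x) = ∫ x, f x := by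
  calc ∫ x, f (c - x) = ∫ x, f (c + x) := by
        rw [← integral_neg_eq_self (fun x => f (c + x))]
        simp [sub_eq_add_neg]
    _ = ∫ x, f x := integral_add_left_eq_self f c

lemma convPow_succ_eq (hgneg : ∀ s < (0:ℝ), g s = 0) (n : ℕ) (x : ℝ) :
    convPow g (n + 1) x = ∫ w, convPow g n (x - w) * g w := by
  have h1 : convPow g (n + 1) x = ∫ s, g (x - s) * convPow g n s :=
    conv_eq_integral hgneg (convPow_neg hgneg n) x
  have h2 : (∫ w, convPow g n (x - w) * g w)
      = ∫ w, (fun v => convPow g n v * g (x - v)) (x - w) := by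
    apply integral_congr_ae
    apply Filter.Eventually.of_forall
    intro w
    simp only
    rw [show x - (x - w) = w by ring]
  rw [h1, h2, integral_reflect (fun v => convPow g n v * g (x - v)) x]
  apply integral_congr_ae
  apply Filter.Eventually.of_forall
  intro v
  simp only [mul_comm]

end Aux2


theorem stmt15
    (φ : ℝ → ℝ) (hφmeas : Measurable φ) (hφnonneg : ∀ s, 0 ≤ φ s)
    (hφneg : ∀ s < (0:ℝ), φ s = 0)
    (hφint : IntegrableOn φ (Set.Ioi 0))
    (hφ1 : ∫ s in Set.Ioi (0:ℝ), φ s = 1)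
    (m : ℝ) (hm : 0 < m)
    (hmint : IntegrableOn (fun s => s * φ s) (Set.Ioi 0))
    (hmval : ∫ s in Set.Ioi (0:ℝ), s * φ s = m)
    (a : ℝ) (ha : 1 < a) (μ : ℝ) (hμ : 0 < μ)
    (u : ℝ → ℝ) (humeas : Measurable u)
    (hub : ∀ t ≥ (0:ℝ), ∃ C, ∀ s ∈ Set.Icc (0:ℝ) t, |u s| ≤ C)
    (hueq : ∀ t ≥ (0:ℝ), u t = μ * t + a * ∫ s in (0:ℝ)..t, φ (t - s) * u s) :
    ∀ t ≥ (0:ℝ),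
      u t = μ * t + μ * ∫ s in (0:ℝ)..t,
        s * (∑' n : ℕ, convPow (fun r => a * φ r) n (t - s)) := by
  intro t ht
  set g : ℝ → ℝ := fun r => a * φ r with hgdef
  have hgm : Measurable g := hφmeas.const_mul a
  have hg0 : ∀ s, 0 ≤ g s := fun s => mul_nonneg (by linarith) (hφnonneg s)
  have hgneg : ∀ s < (0:ℝ), g s = 0 := fun s hs => by
    simp only [hgdef, hφneg s hs, mul_zero]
  have hgi : IntegrableOn g (Set.Ioi 0) := hφint.const_mul a
  obtain ⟨l, hl0, hI⟩ := exists_l hgm hg0 hgi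
  set I := lap l g with hIdef
  have hIne : I ≠ ⊤ := (hI.trans ENNReal.one_lt_top).ne
  obtain ⟨C₀, hC₀⟩ := hub t ht
  set C := max C₀ 0 with hCdef
  have hC0 : (0:ℝ) ≤ C := le_max_right _ _
  have hC : ∀ s ∈ Set.Icc (0:ℝ) t, |u s| ≤ C := fun s hs =>
    (hC₀ s hs).trans (le_max_left _ _)
  set E := Real.exp (l * t) with hEdef
  have hE0 : (0:ℝ) ≤ E := Real.exp_nonneg _
  have hqm : ∀ n, Measurable (convPow g n) := convPow_meas hgm hgneg
  have hq0 : ∀ n s, 0 ≤ convPow g n s := convPow_nonneg hgneg hg0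
  have hqneg := convPow_neg hgneg
  -- lintegral bounds
  have hIoc : ∀ n, (∫⁻ r in Set.Ioc 0 t, ENNReal.ofReal (convPow g n r))
      ≤ ENNReal.ofReal E * I ^ (n+1) := fun n =>
    (lint_Ioc_le hl0 (hq0 n) ht).trans (mul_le_mul_right (lap_convPow hgm hg0 hgneg n) _)
  have hIocR : ∀ n, (∫⁻ s in Set.Ioc 0 t, ENNReal.ofReal (convPow g n (t - s)))
      ≤ ENNReal.ofReal E * I ^ (n+1) := fun n => by
    rw [lintegral_reflect_Ioc (fun r => ENNReal.ofReal (convPow g n r)) t]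
    exact hIoc n
  have hbne : ∀ n : ℕ, ENNReal.ofReal E * I ^ (n+1) ≠ ⊤ := fun n =>
    ENNReal.mul_ne_top ENNReal.ofReal_ne_top (ENNReal.pow_ne_top hIne)
  -- integrability of reflected convPow
  have hqint : ∀ n, IntegrableOn (fun s => convPow g n (t - s)) (Set.Ioc 0 t) := by
    intro n
    constructor
    · exact ((hqm n).comp (measurable_const.sub measurable_id')).aestronglyMeasurable
    · rw [hasFiniteIntegral_iff_norm]
      calc ∫⁻ s in Set.Ioc 0 t, ENNReal.ofReal ‖convPow g n (t - s)‖
          = ∫⁻ s in Set.Ioc 0 t, ENNReal.ofReal (convPow g n (t - s)) := by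
            apply lintegral_congr
            intro s
            rw [Real.norm_eq_abs, abs_of_nonneg (hq0 n _)]
        _ ≤ ENNReal.ofReal E * I ^ (n+1) := hIocR n
        _ < ⊤ := lt_of_le_of_ne le_top (hbne n)
  have hmul : ∀ (n : ℕ) (v : ℝ → ℝ), Measurable v → ∀ C' : ℝ,
      (∀ s ∈ Set.Ioc (0:ℝ) t, |v s| ≤ C') →
      IntegrableOn (fun s => v s * convPow g n (t - s)) (Set.Ioc 0 t) := by
    intro n v hv C' hC'
    apply Integrable.mono' ((hqint n).const_mul C')
    · exact (hv.mul ((hqm n).comp (measurable_const.sub measurable_id'))).aestronglyMeasurable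
    · filter_upwards [ae_restrict_mem measurableSet_Ioc] with s hs
      rw [Real.norm_eq_abs, abs_mul, abs_of_nonneg (hq0 n _)]
      exact mul_le_mul_of_nonneg_right (hC' s hs) (hq0 n _)
  set T : ℕ → ℝ := fun n => ∫ s in Set.Ioc (0:ℝ) t, s * convPow g n (t - s) with hTdef
  set Rm : ℕ → ℝ := fun n => ∫ s in Set.Ioc (0:ℝ) t, u s * convPow g n (t - s) with hRdef
  -- uniform bound on integrals
  have hnorm_le : ∀ (n : ℕ) (v : ℝ → ℝ) (C' : ℝ), 0 ≤ C' →
      (∀ s ∈ Set.Ioc (0:ℝ) t, |v s| ≤ C') →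
      |∫ s in Set.Ioc (0:ℝ) t, v s * convPow g n (t - s)|
        ≤ C' * (E * I.toReal ^ (n+1)) := by
    intro n v C' hC'0 hbd
    have h1 : |∫ s in Set.Ioc (0:ℝ) t, v s * convPow g n (t - s)|
        ≤ (∫⁻ s in Set.Ioc (0:ℝ) t, ENNReal.ofReal ‖v s * convPow g n (t - s)‖).toReal := by
      rw [← Real.norm_eq_abs]
      exact norm_integral_le_lintegral_norm _
    have h2 : (∫⁻ s in Set.Ioc (0:ℝ) t, ENNReal.ofReal ‖v s * convPow g n (t - s)‖)
        ≤ ENNReal.ofReal C' * (ENNReal.ofReal E * I ^ (n+1)) := by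
      calc (∫⁻ s in Set.Ioc (0:ℝ) t, ENNReal.ofReal ‖v s * convPow g n (t - s)‖)
          ≤ ∫⁻ s in Set.Ioc (0:ℝ) t,
              ENNReal.ofReal C' * ENNReal.ofReal (convPow g n (t - s)) := by
            apply setLIntegral_mono' measurableSet_Ioc
            intro s hs
            rw [← ENNReal.ofReal_mul hC'0]
            apply ENNReal.ofReal_le_ofReal
            rw [Real.norm_eq_abs, abs_mul, abs_of_nonneg (hq0 n _)]
            exact mul_le_mul_of_nonneg_right (hbd s hs) (hq0 n _)
        _ = ENNReal.ofReal C' * ∫⁻ s in Set.Ioc (0:ℝ) t,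
              ENNReal.ofReal (convPow g n (t - s)) :=
            lintegral_const_mul' _ _ ENNReal.ofReal_ne_top
        _ ≤ _ := mul_le_mul_right (hIocR n) _
    calc |∫ s in Set.Ioc (0:ℝ) t, v s * convPow g n (t - s)|
        ≤ (∫⁻ s in Set.Ioc (0:ℝ) t, ENNReal.ofReal ‖v s * convPow g n (t - s)‖).toReal := h1
      _ ≤ (ENNReal.ofReal C' * (ENNReal.ofReal E * I ^ (n+1))).toReal :=
          ENNReal.toReal_mono
            (ENNReal.mul_ne_top ENNReal.ofReal_ne_top (hbne n)) h2
      _ = C' * (E * I.toReal ^ (n+1)) := by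
          rw [ENNReal.toReal_mul, ENNReal.toReal_mul, ENNReal.toReal_pow,
            ENNReal.toReal_ofReal hC'0, ENNReal.toReal_ofReal hE0]
  -- toReal facts
  have c0 : (0:ℝ) ≤ I.toReal := ENNReal.toReal_nonneg
  have c1 : I.toReal < 1 := by
    have := (ENNReal.toReal_lt_toReal hIne ENNReal.one_ne_top).mpr hI
    simpa using this
  -- the inductive step
  have step : ∀ N, Rm N = μ * T N + Rm (N + 1) := by
    intro N
    set u' : ℝ → ℝ := Set.indicator (Set.Ioc 0 t) u with hu'def
    have hu'm : Measurable u' := humeas.indicator measurableSet_Ioc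
    have hu'bd : ∀ r, |u' r| ≤ C := by
      intro r
      rw [hu'def]
      by_cases hr : r ∈ Set.Ioc (0:ℝ) t
      · rw [Set.indicator_of_mem hr]; exact hC r ⟨hr.1.le, hr.2⟩
      · rw [Set.indicator_of_notMem hr]; simpa using hC0
    have hu'neg : ∀ r, r ∉ Set.Ioc (0:ℝ) t → u' r = 0 := fun r hr =>
      Set.indicator_of_notMem hr u
    set F : ℝ × ℝ → ℝ := fun p => convPow g N (t - p.1) * g (p.1 - p.2) * u' p.2 with hFdef
    have hFm : Measurable F :=
      (((hqm N).comp (measurable_const.sub measurable_fst)).mul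
        (hgm.comp (measurable_fst.sub measurable_snd))).mul (hu'm.comp measurable_snd)
    have hFs0 : ∀ s, s ∉ Set.Ioc (0:ℝ) t → ∀ r, F (s, r) = 0 := by
      intro s hs r
      simp only [hFdef]
      rcases le_or_gt s t with hst | hst
      · have hs0 : s ≤ 0 := by
          by_contra hcon
          exact hs ⟨lt_of_not_ge hcon, hst⟩
        by_cases hr : r ∈ Set.Ioc (0:ℝ) t
        · rw [hgneg (s - r) (by linarith [hr.1]), mul_zero, zero_mul]
        · rw [hu'neg r hr, mul_zero]
      · rw [hqneg N (t - s) (by linarith), zero_mul, zero_mul]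
    have hFr0 : ∀ r, r ∉ Set.Ioc (0:ℝ) t → ∀ s, F (s, r) = 0 := by
      intro r hr s
      simp only [hFdef]
      rw [hu'neg r hr, mul_zero]
    -- integrability of F on the plane
    have hLgfin : (∫⁻ x, ENNReal.ofReal (g x)) < ⊤ := by
      rw [← lintegral_Ioi_eq (F := fun x => ENNReal.ofReal (g x))
        (fun x hx => by show ENNReal.ofReal (g x) = 0; rw [hgneg x hx]; simp)]
      have hfi := hgi.hasFiniteIntegral
      rw [hasFiniteIntegral_iff_norm] at hfi
      refine lt_of_le_of_lt (lintegral_mono fun x => ?_) hfi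
      exact ENNReal.ofReal_le_ofReal (le_abs_self _)
    have hindfin : (∫⁻ s, Set.indicator (Set.Icc 0 t)
        (fun s => ENNReal.ofReal (C * convPow g N (t - s))) s) < ⊤ := by
      rw [lintegral_indicator measurableSet_Icc]
      calc ∫⁻ s in Set.Icc (0:ℝ) t, ENNReal.ofReal (C * convPow g N (t - s))
          = ∫⁻ s in Set.Icc (0:ℝ) t, ENNReal.ofReal C * ENNReal.ofReal (convPow g N (t - s)) := by
            apply lintegral_congr
            intro s
            rw [ENNReal.ofReal_mul hC0]
        _ = ENNReal.ofReal C * ∫⁻ s in Set.Icc (0:ℝ) t, ENNReal.ofReal (convPow g N (t - s)) :=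
            lintegral_const_mul' _ _ ENNReal.ofReal_ne_top
        _ = ENNReal.ofReal C * ∫⁻ s in Set.Ioc (0:ℝ) t, ENNReal.ofReal (convPow g N (t - s)) := by
            rw [setLIntegral_congr (Ioc_ae_eq_Icc (a := (0:ℝ)) (b := t))]
        _ ≤ ENNReal.ofReal C * (ENNReal.ofReal E * I ^ (N+1)) :=
            mul_le_mul_right (hIocR N) _
        _ < ⊤ := lt_of_le_of_ne le_top
            (ENNReal.mul_ne_top ENNReal.ofReal_ne_top (hbne N))
    have hFint : Integrable F (volume.prod volume) := by
      constructor
      · exact hFm.aestronglyMeasurable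
      · rw [hasFiniteIntegral_iff_norm]
        have hbd : ∀ p : ℝ × ℝ, ENNReal.ofReal ‖F p‖ ≤
            (Set.indicator (Set.Icc 0 t) (fun s => ENNReal.ofReal (C * convPow g N (t - s))) p.1) *
              ENNReal.ofReal (g (p.1 - p.2)) := by
          rintro ⟨s, r⟩
          by_cases hst : s ∈ Set.Icc (0:ℝ) t
          · rw [Set.indicator_of_mem hst,
              ← ENNReal.ofReal_mul (mul_nonneg hC0 (hq0 N _))]
            apply ENNReal.ofReal_le_ofReal
            calc ‖F (s, r)‖ = convPow g N (t - s) * g (s - r) * |u' r| := by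
                  rw [Real.norm_eq_abs]
                  simp only [hFdef]
                  rw [abs_mul, abs_mul, abs_of_nonneg (hq0 N _), abs_of_nonneg (hg0 _)]
              _ ≤ convPow g N (t - s) * g (s - r) * C := by
                  exact mul_le_mul_of_nonneg_left (hu'bd r)
                    (mul_nonneg (hq0 N _) (hg0 _))
              _ = C * convPow g N (t - s) * g (s - r) := by ring
          · have hs' : s ∉ Set.Ioc (0:ℝ) t := fun hcon => hst ⟨hcon.1.le, hcon.2⟩
            rw [show F (s, r) = 0 from hFs0 s hs' r, Set.indicator_of_notMem hst]
            simp
        calc ∫⁻ p, ENNReal.ofReal ‖F p‖ ∂(volume.prod volume)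
            ≤ ∫⁻ p : ℝ × ℝ, (Set.indicator (Set.Icc 0 t)
                (fun s => ENNReal.ofReal (C * convPow g N (t - s))) p.1) *
                ENNReal.ofReal (g (p.1 - p.2)) ∂(volume.prod volume) := lintegral_mono hbd
          _ = ∫⁻ s, ∫⁻ r, (Set.indicator (Set.Icc 0 t)
                (fun s => ENNReal.ofReal (C * convPow g N (t - s))) s) *
                ENNReal.ofReal (g (s - r)) := by
              apply lintegral_prod
              apply Measurable.aemeasurable
              apply Measurable.mul
              · exact ((((measurable_const.mul ((hqm N).comp
                  (measurable_const.sub measurable_id'))).ennreal_ofReal).indicator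
                  measurableSet_Icc).comp measurable_fst)
              · exact (hgm.comp (measurable_fst.sub measurable_snd)).ennreal_ofReal
          _ = ∫⁻ s, (Set.indicator (Set.Icc 0 t)
                (fun s => ENNReal.ofReal (C * convPow g N (t - s))) s) *
                ∫⁻ r, ENNReal.ofReal (g (s - r)) := by
              apply lintegral_congr
              intro s
              apply lintegral_const_mul'
              by_cases hst : s ∈ Set.Icc (0:ℝ) t
              · rw [Set.indicator_of_mem hst]; exact ENNReal.ofReal_ne_top
              · rw [Set.indicator_of_notMem hst]; exact ENNReal.zero_ne_top
          _ = ∫⁻ s, (Set.indicator (Set.Icc 0 t)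
                (fun s => ENNReal.ofReal (C * convPow g N (t - s))) s) *
                ∫⁻ x, ENNReal.ofReal (g x) := by
              apply lintegral_congr
              intro s
              congr 1
              exact lintegral_reflect (fun x => ENNReal.ofReal (g x)) s
          _ = (∫⁻ s, Set.indicator (Set.Icc 0 t)
                (fun s => ENNReal.ofReal (C * convPow g N (t - s))) s) *
                ∫⁻ x, ENNReal.ofReal (g x) :=
              lintegral_mul_const' _ _ hLgfin.ne
          _ < ⊤ := ENNReal.mul_lt_top hindfin hLgfin
    -- pointwise inner representation on Ioc 0 t
    have hinner : ∀ s ∈ Set.Ioc (0:ℝ) t, (∫ r, F (s, r))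
        = convPow g N (t - s) * (u s - μ * s) := by
      intro s hs
      have hs0 : (0:ℝ) < s := hs.1
      have hst : s ≤ t := hs.2
      have h1 : (∫ r, F (s, r))
          = convPow g N (t - s) * ∫ r in Set.Ioc (0:ℝ) s, g (s - r) * u r := by
        have e1 : (∫ r, F (s, r)) = ∫ r, convPow g N (t - s) * (g (s - r) * u' r) := by
          apply integral_congr_ae
          apply Filter.Eventually.of_forall
          intro r
          simp only [hFdef]
          ring
        rw [e1, integral_const_mul]
        congr 1
        rw [← setIntegral_eq_integral_of_forall_compl_eq_zero
          (s := Set.Ioc (0:ℝ) s) (f := fun r => g (s - r) * u' r)]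
        · apply setIntegral_congr_fun measurableSet_Ioc
          intro r hr
          show g (s - r) * Set.indicator (Set.Ioc 0 t) u r = g (s - r) * u r
          rw [Set.indicator_of_mem (Set.mem_Ioc.mpr ⟨hr.1, hr.2.trans hst⟩) u]
        · intro r hr
          simp only [Set.mem_Ioc, not_and_or, not_lt, not_le] at hr
          rcases hr with hr | hr
          · rw [hu'neg r (fun hcon => absurd hcon.1 (not_lt.mpr hr)), mul_zero]
          · rw [hgneg (s - r) (by linarith), zero_mul]
      have h2 : (∫ r in Set.Ioc (0:ℝ) s, g (s - r) * u r) = u s - μ * s := by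
        have he := hueq s hs0.le
        have e2 : (∫ r in (0:ℝ)..s, g (s - r) * u r)
            = a * ∫ r in (0:ℝ)..s, φ (s - r) * u r := by
          rw [← intervalIntegral.integral_const_mul]
          apply intervalIntegral.integral_congr
          intro r _
          simp only [hgdef]
          ring
        rw [← intervalIntegral.integral_of_le hs0.le, e2]
        linarith
      rw [h1, h2]
    -- integrability of the two pieces
    have h1int : IntegrableOn (fun s => (μ * s) * convPow g N (t - s)) (Set.Ioc 0 t) := by
      apply hmul N (fun s => μ * s) (measurable_const.mul measurable_id') (μ * t)
      intro s hs
      rw [abs_of_nonneg (mul_nonneg hμ.le hs.1.le)]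
      exact mul_le_mul_of_nonneg_left hs.2 hμ.le
    have h2int : IntegrableOn (fun s => u s * convPow g N (t - s)) (Set.Ioc 0 t) :=
      hmul N u humeas C (fun s hs => hC s ⟨hs.1.le, hs.2⟩)
    have e3 : Rm N = (∫ s in Set.Ioc (0:ℝ) t, (μ * s) * convPow g N (t - s))
        + ∫ s in Set.Ioc (0:ℝ) t,
            (u s * convPow g N (t - s) - (μ * s) * convPow g N (t - s)) := by
      have hsub : IntegrableOn (fun s => u s * convPow g N (t - s)
          - (μ * s) * convPow g N (t - s)) (Set.Ioc 0 t) := h2int.sub h1int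
      rw [← integral_add h1int hsub]
      show (∫ s in Set.Ioc (0:ℝ) t, u s * convPow g N (t - s)) = _
      apply setIntegral_congr_fun measurableSet_Ioc
      intro s _
      beta_reduce
      ring
    have e4 : (∫ s in Set.Ioc (0:ℝ) t, (μ * s) * convPow g N (t - s)) = μ * T N := by
      show _ = μ * ∫ s in Set.Ioc (0:ℝ) t, s * convPow g N (t - s)
      rw [← integral_const_mul]
      apply setIntegral_congr_fun measurableSet_Ioc
      intro s _
      beta_reduce
      ring
    have e5 : (∫ s in Set.Ioc (0:ℝ) t,
        (u s * convPow g N (t - s) - (μ * s) * convPow g N (t - s))) = Rm (N + 1) := by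
      have e5a : (∫ s in Set.Ioc (0:ℝ) t,
          (u s * convPow g N (t - s) - (μ * s) * convPow g N (t - s)))
          = ∫ s in Set.Ioc (0:ℝ) t, (∫ r, F (s, r)) := by
        apply setIntegral_congr_fun measurableSet_Ioc
        intro s hs
        beta_reduce
        rw [hinner s hs]
        ring
      have e5b : (∫ s in Set.Ioc (0:ℝ) t, (∫ r, F (s, r))) = ∫ s, ∫ r, F (s, r) := by
        apply setIntegral_eq_integral_of_forall_compl_eq_zero
        intro s hs
        have : ∀ r, F (s, r) = 0 := hFs0 s hs
        simp only [this, integral_zero]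
      have e5c : (∫ s, ∫ r, F (s, r)) = ∫ r, ∫ s, F (s, r) :=
        integral_integral_swap hFint
      have e5d : (∫ r, ∫ s, F (s, r)) = ∫ r in Set.Ioc (0:ℝ) t, (∫ s, F (s, r)) := by
        symm
        apply setIntegral_eq_integral_of_forall_compl_eq_zero
        intro r hr
        have : ∀ s, F (s, r) = 0 := hFr0 r hr
        simp only [this, integral_zero]
      have e5e : (∫ r in Set.Ioc (0:ℝ) t, (∫ s, F (s, r))) = Rm (N + 1) := by
        apply setIntegral_congr_fun measurableSet_Ioc
        intro r hr
        have hr1 : u' r = u r := Set.indicator_of_mem hr u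
        calc (∫ s, F (s, r)) = (∫ s, convPow g N (t - s) * g (s - r)) * u r := by
              rw [← hr1, ← integral_mul_const]
          _ = (∫ w, convPow g N (t - r - w) * g w) * u r := by
              congr 1
              have e6 : (fun s : ℝ => convPow g N (t - s) * g (s - r))
                  = fun s => (fun w => convPow g N (t - r - w) * g w) (s - r) := by
                funext s
                simp only
                rw [show t - r - (s - r) = t - s by ring]
              rw [e6, integral_sub_right_eq_self (fun w => convPow g N (t - r - w) * g w) r]
          _ = u r * convPow g (N + 1) (t - r) := by
              rw [convPow_succ_eq hgneg N (t - r)]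
              ring
      rw [e5a, e5b, e5c, e5d, e5e]
    rw [e3, e4, e5]
  -- partial sums identity
  have key : ∀ N, u t = μ * t + μ * (∑ k ∈ Finset.range N, T k) + Rm N := by
    intro N
    induction N with
    | zero =>
      simp only [Finset.range_zero, Finset.sum_empty, mul_zero, add_zero]
      rw [hueq t ht]
      congr 1
      calc a * ∫ s in (0:ℝ)..t, φ (t - s) * u s
          = ∫ s in (0:ℝ)..t, u s * g (t - s) := by
            rw [← intervalIntegral.integral_const_mul]
            apply intervalIntegral.integral_congr
            intro s _
            simp only [hgdef]
            ring
        _ = ∫ s in Set.Ioc (0:ℝ) t, u s * g (t - s) := intervalIntegral.integral_of_le ht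
        _ = Rm 0 := rfl
    | succ n ih =>
      rw [ih, step n, Finset.sum_range_succ]
      ring
  -- remainder tends to zero
  have hRm0 : Tendsto Rm atTop (𝓝 0) := by
    have hbd : ∀ n, ‖Rm n‖ ≤ (C * E * I.toReal) * I.toReal ^ n := by
      intro n
      rw [Real.norm_eq_abs]
      calc |Rm n| ≤ C * (E * I.toReal ^ (n+1)) :=
            hnorm_le n u C hC0 (fun s hs => hC s ⟨hs.1.le, hs.2⟩)
        _ = (C * E * I.toReal) * I.toReal ^ n := by rw [pow_succ]; ring
    apply squeeze_zero_norm hbd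
    have := tendsto_pow_atTop_nhds_zero_of_abs_lt_one
      (by rw [abs_of_nonneg c0]; exact c1 : |I.toReal| < 1)
    have h2 := this.const_mul (C * E * I.toReal)
    simpa using h2
  -- the series of T is summable
  have hTnn : ∀ n, 0 ≤ T n := by
    intro n
    apply setIntegral_nonneg measurableSet_Ioc
    intro s hs
    exact mul_nonneg hs.1.le (hq0 n _)
  have hTle : ∀ n, T n ≤ (t * E * I.toReal) * I.toReal ^ n := by
    intro n
    calc T n ≤ |T n| := le_abs_self _
      _ ≤ t * (E * I.toReal ^ (n+1)) := hnorm_le n (fun s => s) t ht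
          (fun s hs => by rw [abs_of_nonneg hs.1.le]; exact hs.2)
      _ = (t * E * I.toReal) * I.toReal ^ n := by rw [pow_succ]; ring
  have hTsum : Summable T := by
    apply Summable.of_nonneg_of_le hTnn hTle
    exact (summable_geometric_of_lt_one c0 c1).mul_left _
  -- pass to the limit
  have hlim : u t = μ * t + μ * (∑' n, T n) := by
    have hs1 : Tendsto (fun N => ∑ k ∈ Finset.range N, T k) atTop (𝓝 (∑' n, T n)) :=
      hTsum.hasSum.tendsto_sum_nat
    have hs2 : Tendsto (fun N => μ * t + μ * (∑ k ∈ Finset.range N, T k) + Rm N)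
        atTop (𝓝 (μ * t + μ * (∑' n, T n) + 0)) :=
      ((hs1.const_mul μ).const_add (μ * t)).add hRm0
    have hs3 : (fun N => μ * t + μ * (∑ k ∈ Finset.range N, T k) + Rm N)
        = fun _ => u t := funext fun N => (key N).symm
    rw [hs3] at hs2
    have := tendsto_nhds_unique tendsto_const_nhds hs2
    rw [this, add_zero]
  -- identify the integral of the series
  have hfinal : (∫ s in (0:ℝ)..t, s * ∑' n, convPow g n (t - s)) = ∑' n, T n := by
    rw [intervalIntegral.integral_of_le ht]
    calc ∫ s in Set.Ioc (0:ℝ) t, s * ∑' n, convPow g n (t - s)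
        = ∫ s in Set.Ioc (0:ℝ) t, ∑' n, s * convPow g n (t - s) := by
          apply setIntegral_congr_fun measurableSet_Ioc
          intro s _
          exact (tsum_mul_left).symm
      _ = ∑' n, ∫ s in Set.Ioc (0:ℝ) t, s * convPow g n (t - s) := by
          apply integral_tsum
          · intro n
            exact (measurable_id'.mul ((hqm n).comp
              (measurable_const.sub measurable_id'))).aestronglyMeasurable
          · have hb : ∀ n : ℕ, (∫⁻ s in Set.Ioc (0:ℝ) t,
                (‖s * convPow g n (t - s)‖₊ : ℝ≥0∞))
                ≤ ENNReal.ofReal t * (ENNReal.ofReal E * I ^ (n+1)) := by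
              intro n
              calc ∫⁻ s in Set.Ioc (0:ℝ) t, (‖s * convPow g n (t - s)‖₊ : ℝ≥0∞)
                  ≤ ∫⁻ s in Set.Ioc (0:ℝ) t,
                      ENNReal.ofReal t * ENNReal.ofReal (convPow g n (t - s)) := by
                    apply setLIntegral_mono' measurableSet_Ioc
                    intro s hs
                    rw [← enorm_eq_nnnorm, Real.enorm_eq_ofReal (mul_nonneg hs.1.le (hq0 n _)),
                      ← ENNReal.ofReal_mul ht]
                    apply ENNReal.ofReal_le_ofReal
                    exact mul_le_mul_of_nonneg_right hs.2 (hq0 n _)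
                _ = ENNReal.ofReal t * ∫⁻ s in Set.Ioc (0:ℝ) t,
                      ENNReal.ofReal (convPow g n (t - s)) :=
                    lintegral_const_mul' _ _ ENNReal.ofReal_ne_top
                _ ≤ _ := mul_le_mul_right (hIocR n) _
            have hgeo : (∑' n : ℕ, ENNReal.ofReal t * (ENNReal.ofReal E * I ^ (n+1))) ≠ ⊤ := by
              rw [ENNReal.tsum_mul_left]
              apply ENNReal.mul_ne_top ENNReal.ofReal_ne_top
              rw [ENNReal.tsum_mul_left]
              apply ENNReal.mul_ne_top ENNReal.ofReal_ne_top
              have hpow : (∑' n : ℕ, I ^ (n+1)) = I * (1 - I)⁻¹ := by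
                rw [← ENNReal.tsum_geometric I, ← ENNReal.tsum_mul_left]
                apply tsum_congr
                intro n
                rw [pow_succ]
                ring
              rw [hpow]
              apply ENNReal.mul_ne_top hIne
              rw [Ne, ENNReal.inv_eq_top]
              exact (tsub_pos_of_lt hI).ne'
            exact ne_top_of_le_ne_top hgeo (ENNReal.tsum_le_tsum hb)
  rw [hfinal]
  exact hlim
end

section
/- Let φ : [0,∞) → [0,∞) be a measurable probability density with ∫_0^∞ φ(s) ds = 1 and finite positive mean m = ∫_0^∞ s φ(s) ds ∈ (0,∞), let μ > 0, let T > 0, let a > 1, let b > 0 satisfy ∫_0^∞ e^{−bs} a φ(s) ds = 1/a, and let u : [0,∞) → ℝ be the unique locally bounded measurable solution of u(t) = μ t + a ∫_0^t φ(t−s) u(s) ds for all t ≥ 0. Then for every x ∈ [0,1], ((a − 1)/(T e^{bTx})) u(Tx) ≤ μ a. -/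
open MeasureTheory Filter Topology

theorem stmt17
    (φ : ℝ → ℝ) (hφmeas : Measurable φ) (hφnonneg : ∀ s, 0 ≤ φ s)
    (hφneg : ∀ s < (0:ℝ), φ s = 0)
    (hφint : IntegrableOn φ (Set.Ioi 0))
    (hφ1 : ∫ s in Set.Ioi (0:ℝ), φ s = 1)
    (m : ℝ) (hm : 0 < m)
    (hmint : IntegrableOn (fun s => s * φ s) (Set.Ioi 0))
    (hmval : ∫ s in Set.Ioi (0:ℝ), s * φ s = m)
    (μ : ℝ) (hμ : 0 < μ)
    (T : ℝ) (hT : 0 < T)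
    (a : ℝ) (ha : 1 < a)
    (b : ℝ) (hb : 0 < b)
    (hbeq : ∫ s in Set.Ioi (0:ℝ), Real.exp (-b * s) * (a * φ s) = 1 / a)
    (u : ℝ → ℝ) (humeas : Measurable u)
    (hub : ∀ t ≥ (0:ℝ), ∃ C, ∀ s ∈ Set.Icc (0:ℝ) t, |u s| ≤ C)
    (hueq : ∀ t ≥ (0:ℝ), u t = μ * t + a * ∫ s in (0:ℝ)..t, φ (t - s) * u s) :
    ∀ x ∈ Set.Icc (0:ℝ) 1,
      ((a - 1) / (T * Real.exp (b * T * x))) * u (T * x) ≤ μ * a := by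
  have ha0 : (0:ℝ) < a := lt_trans one_pos ha
  -- the exponentially discounted kernel g
  set g : ℝ → ℝ := fun s => Real.exp (-b * s) * φ s with hgdef
  have hgmeas : Measurable g :=
    ((measurable_const.mul measurable_id).exp).mul hφmeas
  have hgnonneg : ∀ s, 0 ≤ g s := fun s =>
    mul_nonneg (Real.exp_pos _).le (hφnonneg s)
  have hgint : IntegrableOn g (Set.Ioi 0) := by
    refine hφint.mono' hgmeas.aestronglyMeasurable ?_
    filter_upwards [ae_restrict_mem measurableSet_Ioi] with s hs
    have h1 : Real.exp (-b * s) ≤ 1 := by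
      apply Real.exp_le_one_iff.mpr
      nlinarith [Set.mem_Ioi.mp hs]
    have := hφnonneg s
    rw [Real.norm_eq_abs, abs_of_nonneg (hgnonneg s)]
    calc g s ≤ 1 * φ s := by apply mul_le_mul_of_nonneg_right h1 this
    _ = φ s := one_mul _
  have hgval : ∫ s in Set.Ioi (0:ℝ), g s = 1 / (a * a) := by
    have h : ∫ s in Set.Ioi (0:ℝ), Real.exp (-b * s) * (a * φ s)
        = a * ∫ s in Set.Ioi (0:ℝ), g s := by
      rw [← integral_const_mul]
      congr 1; ext s; simp [hgdef]; ring
    rw [h] at hbeq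
    field_simp at hbeq ⊢
    linarith [hbeq]
  -- bound on partial integrals of g
  have hgpartial : ∀ t : ℝ, 0 ≤ t → ∫ s in (0:ℝ)..t, g s ≤ 1 / (a * a) := by
    intro t ht
    rw [intervalIntegral.integral_of_le ht, ← hgval]
    refine setIntegral_mono_set hgint ?_ (Set.Ioc_subset_Ioi_self.eventuallyLE)
    filter_upwards with s using hgnonneg s
  -- the sup of discounted |u| on [0,T]
  obtain ⟨C, hC⟩ := hub T hT.le
  set S : Set ℝ := (fun s => Real.exp (-b * s) * |u s|) '' Set.Icc 0 T with hSdef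
  have hSne : S.Nonempty := ⟨_, ⟨0, by simp [hT.le], rfl⟩⟩
  have hSbdd : BddAbove S := by
    refine ⟨C, ?_⟩
    rintro y ⟨s, hs, rfl⟩
    have h1 : Real.exp (-b * s) ≤ 1 := by
      apply Real.exp_le_one_iff.mpr
      nlinarith [hs.1]
    have h2 : |u s| ≤ C := hC s hs
    show Real.exp (-b * s) * |u s| ≤ C
    nlinarith [abs_nonneg (u s), Real.exp_pos (-b * s)]
  set M : ℝ := sSup S with hMdef
  have hMmem : ∀ s ∈ Set.Icc (0:ℝ) T, Real.exp (-b * s) * |u s| ≤ M :=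
    fun s hs => le_csSup hSbdd ⟨s, hs, rfl⟩
  have hM0 : 0 ≤ M := by
    have := hMmem 0 (by simp [hT.le])
    simp at this
    exact le_trans (abs_nonneg _) this
  -- the main pointwise estimate
  have hmain : ∀ t ∈ Set.Icc (0:ℝ) T, Real.exp (-b * t) * |u t| ≤ μ * T + M / a := by
    intro t ht
    obtain ⟨ht0, htT⟩ := ht
    -- integrability facts on [0, t]
    have hφIoc : IntegrableOn φ (Set.Ioc 0 t) := hφint.mono_set Set.Ioc_subset_Ioi_self
    have hφII : IntervalIntegrable φ volume 0 t :=
      (intervalIntegrable_iff_integrableOn_Ioc_of_le ht0).mpr hφIoc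
    have hφsub : IntervalIntegrable (fun s => φ (t - s)) volume 0 t := by
      have := (hφII.comp_sub_left t).symm
      simpa using this
    have hgIoc : IntegrableOn g (Set.Ioc 0 t) := hgint.mono_set Set.Ioc_subset_Ioi_self
    have hgII : IntervalIntegrable g volume 0 t :=
      (intervalIntegrable_iff_integrableOn_Ioc_of_le ht0).mpr hgIoc
    have hgsub : IntervalIntegrable (fun s => g (t - s)) volume 0 t := by
      have := (hgII.comp_sub_left t).symm
      simpa using this
    have hC0 : 0 ≤ C := le_trans (abs_nonneg _) (hC 0 (by simp [hT.le]))
    have hprodmeas : Measurable (fun s => φ (t - s) * u s) :=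
      (hφmeas.comp (measurable_const.sub measurable_id)).mul humeas
    have hprodII : IntervalIntegrable (fun s => φ (t - s) * u s) volume 0 t := by
      rw [intervalIntegrable_iff_integrableOn_Ioc_of_le ht0]
      refine ((intervalIntegrable_iff_integrableOn_Ioc_of_le ht0).mp
        (hφsub.const_mul C)).mono' hprodmeas.aestronglyMeasurable ?_
      filter_upwards [ae_restrict_mem measurableSet_Ioc] with s hs
      have hus : |u s| ≤ C := hC s ⟨hs.1.le, le_trans hs.2 htT⟩
      rw [Real.norm_eq_abs, abs_mul, abs_of_nonneg (hφnonneg _)]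
      have := hφnonneg (t - s)
      nlinarith [abs_nonneg (u s)]
    have habsII : IntervalIntegrable (fun s => φ (t - s) * |u s|) volume 0 t := by
      have : (fun s => φ (t - s) * |u s|) = fun s => |φ (t - s) * u s| := by
        ext s; rw [abs_mul, abs_of_nonneg (hφnonneg _)]
      rw [this]
      exact hprodII.abs
    -- bound on the convolution integral
    have hconv : ∫ s in (0:ℝ)..t, φ (t - s) * |u s|
        ≤ ∫ s in (0:ℝ)..t, Real.exp (b * t) * M * g (t - s) := by
      refine intervalIntegral.integral_mono_on ht0 habsII
        ((hgsub.const_mul _)) ?_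
      intro s hs
      have hus : Real.exp (-b * s) * |u s| ≤ M :=
        hMmem s ⟨hs.1, le_trans hs.2 htT⟩
      have hexp : Real.exp (b * t) * Real.exp (-b * (t - s)) = Real.exp (b * s) := by
        rw [← Real.exp_add]; ring_nf
      have hφpos := hφnonneg (t - s)
      have h2 : |u s| ≤ Real.exp (b * s) * M := by
        have h4 : Real.exp (b * s) * Real.exp (-b * s) = 1 := by
          rw [← Real.exp_add]; ring_nf; exact Real.exp_zero
        calc |u s| = Real.exp (b * s) * (Real.exp (-b * s) * |u s|) := by
              rw [← mul_assoc, h4, one_mul]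
          _ ≤ Real.exp (b * s) * M :=
              mul_le_mul_of_nonneg_left hus (Real.exp_pos _).le
      calc φ (t - s) * |u s| ≤ φ (t - s) * (Real.exp (b * s) * M) :=
            mul_le_mul_of_nonneg_left h2 hφpos
        _ = Real.exp (b * t) * M * g (t - s) := by
            simp only [hgdef]
            rw [← hexp]; ring
    have hconv2 : ∫ s in (0:ℝ)..t, Real.exp (b * t) * M * g (t - s)
        = Real.exp (b * t) * M * ∫ s in (0:ℝ)..t, g s := by
      rw [intervalIntegral.integral_const_mul]
      congr 1
      have := intervalIntegral.integral_comp_sub_left g t (a := 0) (b := t)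
      simpa using this
    have habs : |∫ s in (0:ℝ)..t, φ (t - s) * u s|
        ≤ ∫ s in (0:ℝ)..t, φ (t - s) * |u s| := by
      have h := intervalIntegral.abs_integral_le_integral_abs (μ := volume) (f := fun s => φ (t - s) * u s) ht0
      calc |∫ s in (0:ℝ)..t, φ (t - s) * u s|
          ≤ ∫ s in (0:ℝ)..t, |φ (t - s) * u s| := h
        _ = ∫ s in (0:ℝ)..t, φ (t - s) * |u s| := by
            congr 1; ext s; rw [abs_mul, abs_of_nonneg (hφnonneg _)]
    -- put it together
    have hut : |u t| ≤ μ * t + Real.exp (b * t) * M / a := by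
      have heq := hueq t ht0
      have h1 : |u t| ≤ μ * t + a * |∫ s in (0:ℝ)..t, φ (t - s) * u s| := by
        rw [heq]
        calc |μ * t + a * ∫ s in (0:ℝ)..t, φ (t - s) * u s|
            ≤ |μ * t| + |a * ∫ s in (0:ℝ)..t, φ (t - s) * u s| := abs_add_le _ _
          _ = μ * t + a * |∫ s in (0:ℝ)..t, φ (t - s) * u s| := by
              rw [abs_of_nonneg (by positivity), abs_mul, abs_of_nonneg ha0.le]
      have h2 : a * |∫ s in (0:ℝ)..t, φ (t - s) * u s|
          ≤ Real.exp (b * t) * M / a := by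
        have h3 : |∫ s in (0:ℝ)..t, φ (t - s) * u s|
            ≤ Real.exp (b * t) * M * (1 / (a * a)) := by
          calc |∫ s in (0:ℝ)..t, φ (t - s) * u s|
              ≤ ∫ s in (0:ℝ)..t, φ (t - s) * |u s| := habs
            _ ≤ Real.exp (b * t) * M * ∫ s in (0:ℝ)..t, g s := by
                rw [← hconv2]; exact hconv
            _ ≤ Real.exp (b * t) * M * (1 / (a * a)) := by
                apply mul_le_mul_of_nonneg_left (hgpartial t ht0)
                positivity
        have h4 := mul_le_mul_of_nonneg_left h3 ha0.le
        calc a * |∫ s in (0:ℝ)..t, φ (t - s) * u s|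
            ≤ a * (Real.exp (b * t) * M * (1 / (a * a))) := h4
          _ = Real.exp (b * t) * M / a := by field_simp
      linarith
    -- multiply by exp(-bt)
    have hexp1 : Real.exp (-b * t) ≤ 1 := by
      apply Real.exp_le_one_iff.mpr; nlinarith
    have hexpmul : Real.exp (-b * t) * Real.exp (b * t) = 1 := by
      rw [← Real.exp_add]; ring_nf; exact Real.exp_zero
    have h5 : Real.exp (-b * t) * |u t|
        ≤ Real.exp (-b * t) * (μ * t + Real.exp (b * t) * M / a) :=
      mul_le_mul_of_nonneg_left hut (Real.exp_pos _).le
    have h6 : Real.exp (-b * t) * (μ * t + Real.exp (b * t) * M / a)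
        = Real.exp (-b * t) * (μ * t) + M / a := by
      rw [mul_add]
      congr 1
      calc Real.exp (-b * t) * (Real.exp (b * t) * M / a)
          = Real.exp (-b * t) * Real.exp (b * t) * (M / a) := by ring
        _ = M / a := by rw [hexpmul, one_mul]
    have h7 : Real.exp (-b * t) * (μ * t) ≤ μ * T := by
      have : μ * t ≤ μ * T := mul_le_mul_of_nonneg_left htT hμ.le
      nlinarith [mul_nonneg hμ.le ht0, Real.exp_pos (-b * t)]
    rw [h6] at h5
    linarith
  -- hence M ≤ μT + M/a, so M ≤ a μ T / (a-1)
  have hMle : M ≤ μ * T + M / a := by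
    apply csSup_le hSne
    rintro y ⟨s, hs, rfl⟩
    exact hmain s hs
  have hMbound : M * (a - 1) ≤ a * μ * T := by
    have := mul_le_mul_of_nonneg_left hMle ha0.le
    have h8 : a * (M / a) = M := by field_simp
    nlinarith
  -- conclude
  intro x hx
  obtain ⟨hx0, hx1⟩ := hx
  set t : ℝ := T * x with htdef
  have ht0 : 0 ≤ t := mul_nonneg hT.le hx0
  have htT : t ≤ T := by nlinarith
  have hut : u t ≤ Real.exp (b * t) * M := by
    have h1 : Real.exp (-b * t) * |u t| ≤ M := hMmem t ⟨ht0, htT⟩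
    have h3 : Real.exp (b * t) * Real.exp (-b * t) = 1 := by
      rw [← Real.exp_add]; ring_nf; exact Real.exp_zero
    calc u t ≤ |u t| := le_abs_self _
      _ = Real.exp (b * t) * (Real.exp (-b * t) * |u t|) := by
          rw [← mul_assoc, h3, one_mul]
      _ ≤ Real.exp (b * t) * M := mul_le_mul_of_nonneg_left h1 (Real.exp_pos _).le
  have hbtx : b * T * x = b * t := by rw [htdef]; ring
  rw [hbtx]
  have hE : 0 < T * Real.exp (b * t) := by positivity
  rw [div_mul_eq_mul_div, div_le_iff₀ hE]
  have ha1 : 0 < a - 1 := by linarith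
  have h9 : (a - 1) * u t ≤ (a - 1) * (Real.exp (b * t) * M) :=
    mul_le_mul_of_nonneg_left hut ha1.le
  nlinarith [Real.exp_pos (b * t), hMbound]
end
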